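/- Let (Ω̄, 𝒢) be a measurable space, 𝒬 a nonempty convex set of probability measures on (Ω̄, 𝒢), and Y : Ω̄ → ℝ^d a 𝒢-measurable random variable. Then the one-period no-arbitrage condition NA(𝒬) holds if and only if the one-period quantitative no-arbitrage condition holds, i.e. there exist constants β, κ ∈ (0,1] such that for every h ∈ Aff(D) with h ≠ 0 there exists P_h ∈ 𝒬 satisfying P_h(h·Y < −β|h|) ≥ κ. -/

import Mathlib

open MeasureTheory Set
open scoped ENNReal

/-- The quasi-sure support of `Y` under the family of priors `𝒬`. -/
def qsSupport {Ω : Type*} [MeasurableSpace Ω] {d : ℕ} (𝒬 : Set (Measure Ω))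
    (Y : Ω → EuclideanSpace ℝ (Fin d)) : Set (EuclideanSpace ℝ (Fin d)) :=
  ⋂₀ {A : Set (EuclideanSpace ℝ (Fin d)) | IsClosed A ∧ ∀ P ∈ 𝒬, P (Y ⁻¹' A) = 1}

/-- One-period no-arbitrage condition `NA(𝒬)`. -/
def NAcond {Ω : Type*} [MeasurableSpace Ω] {d : ℕ} (𝒬 : Set (Measure Ω))
    (Y : Ω → EuclideanSpace ℝ (Fin d)) : Prop :=
  ∀ h : EuclideanSpace ℝ (Fin d),
    (∀ P ∈ 𝒬, ∀ᵐ ω ∂P, 0 ≤ (inner ℝ h (Y ω) : ℝ)) →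
    ∀ P ∈ 𝒬, ∀ᵐ ω ∂P, (inner ℝ h (Y ω) : ℝ) = 0

/-- Convexity of a set of measures. -/
def ConvexMeasSet {Ω : Type*} [MeasurableSpace Ω] (𝒬 : Set (Measure Ω)) : Prop :=
  ∀ P ∈ 𝒬, ∀ Q ∈ 𝒬, ∀ t : ℝ≥0∞, t ≤ 1 → t • P + (1 - t) • Q ∈ 𝒬

lemma real_calc {m : ℕ} {u v N M p : ℝ} (h1 : u ≤ -(1/((m:ℝ)+1))) (h2 : v ≤ N*M)
    (h3 : N ≤ 1/((2*((m:ℝ)+1))*((m:ℝ)+1))) (h4 : M ≤ m) (h5 : 0 ≤ M) (h6 : 0 ≤ N)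
    (h7 : 2*(m:ℝ)+2 ≤ p) : u + v < -(1/(p+1)) := by
  have hm : (0:ℝ) < (m:ℝ)+1 := by positivity
  have hp : (0:ℝ) < p+1 := by linarith
  have hNM : N*M ≤ (1/((2*((m:ℝ)+1))*((m:ℝ)+1)))*m := by
    calc N*M ≤ N*m := by nlinarith
      _ ≤ _ := by
          have hm0 : (0:ℝ) ≤ (m:ℝ) := Nat.cast_nonneg m
          nlinarith
  have h8 : 1/(p+1) < 1/(2*((m:ℝ)+1)) := by
    apply one_div_lt_one_div_of_lt (by positivity)
    linarith
  have h9 : -(1/((m:ℝ)+1)) + (1/((2*((m:ℝ)+1))*((m:ℝ)+1)))*m ≤ -(1/(2*((m:ℝ)+1))) := by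
    have hA : ((m:ℝ)+1) ≠ 0 := ne_of_gt hm
    rw [← sub_nonneg]
    have heq : -(1/(2*((m:ℝ)+1))) - (-(1/((m:ℝ)+1)) + (1/((2*((m:ℝ)+1))*((m:ℝ)+1)))*m)
        = 1/(2*(((m:ℝ)+1)*((m:ℝ)+1))) := by
      field_simp
      ring
    rw [heq]
    positivity
  linarith

lemma ae_mem_qsSupport {Ω : Type*} [MeasurableSpace Ω] {d : ℕ} (𝒬 : Set (Measure Ω))
    (h𝒬prob : ∀ P ∈ 𝒬, IsProbabilityMeasure P)
    (Y : Ω → EuclideanSpace ℝ (Fin d)) (hY : Measurable Y)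
    {P : Measure Ω} (hP : P ∈ 𝒬) : ∀ᵐ ω ∂P, Y ω ∈ qsSupport 𝒬 Y := by
  haveI := h𝒬prob P hP
  set S := {A : Set (EuclideanSpace ℝ (Fin d)) | IsClosed A ∧ ∀ P ∈ 𝒬, P (Y ⁻¹' A) = 1} with hS
  have hopen : ∀ s ∈ compl '' S, IsOpen s := by
    rintro s ⟨A, hA, rfl⟩; exact hA.1.isOpen_compl
  obtain ⟨T, hTc, hTS, hTeq⟩ := TopologicalSpace.isOpen_sUnion_countable _ hopen
  have hDc : (qsSupport 𝒬 Y)ᶜ = ⋃₀ T := by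
    rw [hTeq, qsSupport, Set.compl_sInter, Set.sUnion_image]
  have hnull : P (Y ⁻¹' (qsSupport 𝒬 Y)ᶜ) = 0 := by
    rw [hDc, Set.preimage_sUnion]
    rw [measure_biUnion_null_iff hTc]
    intro t ht
    obtain ⟨A, hA, rfl⟩ := hTS ht
    have : P (Y ⁻¹' A) = 1 := hA.2 P hP
    rw [Set.preimage_compl]
    exact (prob_compl_eq_zero_iff (hY hA.1.measurableSet)).2 this
  exact hnull

-- nearest point lemma
lemma exists_normal_of_zero_not_mem {d : ℕ} (s : Set (EuclideanSpace ℝ (Fin d)))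
    (hs : s.Nonempty) (h0 : (0 : EuclideanSpace ℝ (Fin d)) ∉ affineSpan ℝ s) :
    ∃ w : EuclideanSpace ℝ (Fin d), w ∈ affineSpan ℝ s ∧ w ≠ 0 ∧
      ∀ y ∈ affineSpan ℝ s, (inner ℝ w y : ℝ) = ‖w‖ ^ 2 := by
  obtain ⟨y₀, hy₀⟩ := hs
  have hy₀' : y₀ ∈ affineSpan ℝ s := subset_affineSpan ℝ s hy₀
  set K := (affineSpan ℝ s).direction with hK
  set w : EuclideanSpace ℝ (Fin d) := y₀ - (K.orthogonalProjectionOnto y₀ : EuclideanSpace ℝ (Fin d)) with hw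
  have hwW : w ∈ affineSpan ℝ s := by
    have : (-(K.orthogonalProjectionOnto y₀ : EuclideanSpace ℝ (Fin d))) ∈ K :=
      K.neg_mem (K.orthogonalProjectionOnto y₀).2
    have := AffineSubspace.vadd_mem_of_mem_direction this hy₀'
    simpa [hw, sub_eq_neg_add] using this
  have hwperp : w ∈ Kᗮ := Submodule.sub_starProjection_mem_orthogonal (K := K) y₀
  refine ⟨w, hwW, ?_, ?_⟩
  · intro hweq; rw [hweq] at hwW; exact h0 hwW
  · intro y hy
    have hyw : y - w ∈ K := by
      have := AffineSubspace.vsub_mem_direction hy hwW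
      simpa [vsub_eq_sub] using this
    have h1 : (inner ℝ (y - w) w : ℝ) = 0 := (Submodule.mem_orthogonal K w).1 hwperp _ hyw
    have h2 : (inner ℝ w (y - w) : ℝ) = 0 := by rw [real_inner_comm]; exact h1
    have := real_inner_self_eq_norm_sq w
    calc (inner ℝ w y : ℝ) = inner ℝ w (y - w) + inner ℝ w w := by
          rw [← inner_add_right]; congr 1; abel
      _ = ‖w‖ ^ 2 := by rw [h2, this, zero_add]

lemma mem_affineSpan_iff_mem_direction {d : ℕ} {s : Set (EuclideanSpace ℝ (Fin d))}
    (h0 : (0 : EuclideanSpace ℝ (Fin d)) ∈ affineSpan ℝ s) (x : EuclideanSpace ℝ (Fin d)) :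
    x ∈ affineSpan ℝ s ↔ x ∈ (affineSpan ℝ s).direction := by
  constructor
  · intro hx
    have := AffineSubspace.vsub_mem_direction hx h0
    simpa [vsub_eq_sub] using this
  · intro hx
    have := AffineSubspace.vadd_mem_of_mem_direction hx h0
    simpa using this

/-- NA(𝒬) is equivalent to the quantitative no-arbitrage condition: there are
`β, κ ∈ (0,1]` such that every nonzero `h` in `Aff(D)` admits a prior `P_h ∈ 𝒬`
with `P_h(h·Y < -β|h|) ≥ κ`. -/
theorem na_iff_quantitative
    {Ω : Type*} [MeasurableSpace Ω] {d : ℕ}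
    (𝒬 : Set (Measure Ω)) (h𝒬ne : 𝒬.Nonempty)
    (h𝒬prob : ∀ P ∈ 𝒬, IsProbabilityMeasure P)
    (h𝒬conv : ConvexMeasSet 𝒬)
    (Y : Ω → EuclideanSpace ℝ (Fin d)) (hY : Measurable Y) :
    NAcond 𝒬 Y ↔
      ∃ β κ : ℝ, 0 < β ∧ β ≤ 1 ∧ 0 < κ ∧ κ ≤ 1 ∧
        ∀ h : EuclideanSpace ℝ (Fin d),
          h ∈ affineSpan ℝ (qsSupport 𝒬 Y) → h ≠ 0 →
          ∃ P ∈ 𝒬, ENNReal.ofReal κ ≤ P {ω | (inner ℝ h (Y ω) : ℝ) < -β * ‖h‖} := by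
  obtain ⟨P₀, hP₀⟩ := h𝒬ne
  haveI := h𝒬prob P₀ hP₀
  set D := qsSupport 𝒬 Y with hD
  have hDne : D.Nonempty := by
    by_contra hc
    rw [Set.not_nonempty_iff_eq_empty] at hc
    have h1 := ae_mem_qsSupport 𝒬 h𝒬prob Y hY hP₀
    rw [← hD, hc] at h1
    simp only [Set.mem_empty_iff_false] at h1
    have : (1 : ℝ≥0∞) = 0 := by
      rw [← measure_univ (μ := P₀)]
      simpa [ae_iff] using h1
    exact one_ne_zero this
  constructor
  · -- NA → quantitative
    intro hNA
    -- 0 ∈ affine span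
    have h0W : (0 : EuclideanSpace ℝ (Fin d)) ∈ affineSpan ℝ D := by
      by_contra h0
      obtain ⟨w, hwW, hwne, hwip⟩ := exists_normal_of_zero_not_mem D hDne h0
      have hpos : ∀ P ∈ 𝒬, ∀ᵐ ω ∂P, 0 ≤ (inner ℝ w (Y ω) : ℝ) := by
        intro P hP
        filter_upwards [ae_mem_qsSupport 𝒬 h𝒬prob Y hY hP] with ω hω
        rw [hwip _ (subset_affineSpan ℝ D hω)]
        positivity
      have hzero := hNA w hpos P₀ hP₀
      haveI : (ae P₀).NeBot := ae_neBot.2 (IsProbabilityMeasure.ne_zero (μ := P₀))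
      obtain ⟨ω, hω1, hω2⟩ := (hzero.and (ae_mem_qsSupport 𝒬 h𝒬prob Y hY hP₀)).exists
      have h2 := hwip _ (subset_affineSpan ℝ D hω2)
      rw [hω1] at h2
      exact hwne (norm_eq_zero.1 (by nlinarith [norm_nonneg w]))
    by_contra hq
    have H : ∀ n : ℕ, ∃ hv : EuclideanSpace ℝ (Fin d), hv ∈ affineSpan ℝ D ∧ hv ≠ 0 ∧
        ∀ P ∈ 𝒬, P {ω | (inner ℝ hv (Y ω) : ℝ) < -(1/((n:ℝ)+1)) * ‖hv‖}
          < ENNReal.ofReal (1/((n:ℝ)+1)) := by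
      intro n
      by_contra hcon
      push_neg at hcon
      have h1 : (0:ℝ) < 1/((n:ℝ)+1) := by positivity
      have h2 : (1:ℝ)/((n:ℝ)+1) ≤ 1 := by
        rw [div_le_one (by positivity)]
        simp [Nat.cast_nonneg]
      exact hq ⟨1/((n:ℝ)+1), 1/((n:ℝ)+1), h1, h2, h1, h2, hcon⟩
    choose hv hmem hne hsmall using H
    set g : ℕ → EuclideanSpace ℝ (Fin d) := fun n => ‖hv n‖⁻¹ • hv n with hg
    have hgnorm : ∀ n, ‖g n‖ = 1 := by
      intro n
      rw [hg]
      simp only [norm_smul, norm_inv, norm_norm]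
      rw [inv_mul_cancel₀ (norm_ne_zero_iff.2 (hne n))]
    have hgK : ∀ n, g n ∈ (affineSpan ℝ D).direction := fun n =>
      Submodule.smul_mem _ _ ((mem_affineSpan_iff_mem_direction h0W _).1 (hmem n))
    have hgsmall : ∀ n, ∀ P ∈ 𝒬,
        P {ω | (inner ℝ (g n) (Y ω) : ℝ) < -(1/((n:ℝ)+1))} < ENNReal.ofReal (1/((n:ℝ)+1)) := by
      intro n P hP
      have hn0 : (0:ℝ) < ‖hv n‖ := norm_pos_iff.2 (hne n)
      have hsets : {ω | (inner ℝ (g n) (Y ω) : ℝ) < -(1/((n:ℝ)+1))}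
          = {ω | (inner ℝ (hv n) (Y ω) : ℝ) < -(1/((n:ℝ)+1)) * ‖hv n‖} := by
        ext ω
        simp only [Set.mem_setOf_eq, hg, real_inner_smul_left]
        rw [inv_mul_lt_iff₀ hn0, mul_comm]
      rw [hsets]
      exact hsmall n P hP
    have hcomp : IsCompact ((Metric.sphere (0 : EuclideanSpace ℝ (Fin d)) 1)
        ∩ ((affineSpan ℝ D).direction : Set (EuclideanSpace ℝ (Fin d)))) :=
      (isCompact_sphere 0 1).inter_right (Submodule.closed_of_finiteDimensional _)
    obtain ⟨a, ⟨hasph, haK⟩, φ, hφ, hconv⟩ := hcomp.tendsto_subseq (x := g)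
      (fun n => ⟨by simp [mem_sphere_iff_norm, hgnorm n], hgK n⟩)
    have hanorm : ‖a‖ = 1 := by simpa [mem_sphere_iff_norm] using hasph
    -- a · Y ≥ 0 q.s.
    have hapos : ∀ P ∈ 𝒬, ∀ᵐ ω ∂P, 0 ≤ (inner ℝ a (Y ω) : ℝ) := by
      intro P hP
      rw [ae_iff]
      have hsub : {ω | ¬ 0 ≤ (inner ℝ a (Y ω) : ℝ)}
          ⊆ ⋃ m : ℕ, {ω | (inner ℝ a (Y ω) : ℝ) ≤ -(1/((m:ℝ)+1)) ∧ ‖Y ω‖ ≤ m} := by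
        intro ω hω
        rw [Set.mem_setOf_eq, not_le] at hω
        obtain ⟨m₁, hm₁⟩ := exists_nat_one_div_lt (show (0:ℝ) < -(inner ℝ a (Y ω)) by linarith)
        obtain ⟨m₂, hm₂⟩ := exists_nat_ge ‖Y ω‖
        refine Set.mem_iUnion.2 ⟨max m₁ m₂, ?_, ?_⟩
        · have hle : (1:ℝ)/(((max m₁ m₂ : ℕ):ℝ)+1) ≤ 1/((m₁:ℝ)+1) := by
            apply one_div_le_one_div_of_le (by positivity)
            have : (m₁:ℝ) ≤ ((max m₁ m₂ : ℕ):ℝ) := by exact_mod_cast le_max_left m₁ m₂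
            linarith
          show (inner ℝ a (Y ω) : ℝ) ≤ -(1/(((max m₁ m₂ : ℕ):ℝ)+1))
          linarith
        · exact le_trans hm₂ (by exact_mod_cast Nat.cast_le.2 (le_max_right m₁ m₂))
      refine measure_mono_null hsub (measure_iUnion_null fun m => ?_)
      -- P E m = 0
      obtain ⟨N₁, hN₁⟩ := (Metric.tendsto_atTop.1 hconv)
        (1/((2*((m:ℝ)+1))*((m:ℝ)+1))) (by positivity)
      have key : ∀ n, max N₁ (2*m+2) ≤ n →
          P {ω | (inner ℝ a (Y ω) : ℝ) ≤ -(1/((m:ℝ)+1)) ∧ ‖Y ω‖ ≤ m}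
            ≤ ENNReal.ofReal (1/((φ n : ℝ)+1)) := by
        intro n hn
        have hn1 : N₁ ≤ n := le_trans (le_max_left _ _) hn
        have hn2 : 2*m+2 ≤ φ n := le_trans (le_trans (le_max_right _ _) hn) hφ.le_apply
        refine le_trans (measure_mono ?_) (le_of_lt (hgsmall (φ n) P hP))
        rintro ω ⟨hω1, hω2⟩
        show (inner ℝ (g (φ n)) (Y ω) : ℝ) < -(1/((φ n : ℝ)+1))
        have hd : ‖g (φ n) - a‖ < 1/((2*((m:ℝ)+1))*((m:ℝ)+1)) := by
          rw [← dist_eq_norm]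
          exact hN₁ n hn1
        have hb : (inner ℝ (g (φ n) - a) (Y ω) : ℝ) ≤ ‖g (φ n) - a‖ * ‖Y ω‖ :=
          real_inner_le_norm _ _
        have heq : (inner ℝ (g (φ n)) (Y ω) : ℝ)
            = inner ℝ a (Y ω) + inner ℝ (g (φ n) - a) (Y ω) := by
          rw [← inner_add_left]
          congr 1
          abel
        rw [heq]
        exact real_calc hω1 hb hd.le hω2 (norm_nonneg _) (norm_nonneg _)
          (by exact_mod_cast hn2)
      have htend : Filter.Tendsto (fun n => ENNReal.ofReal (1/((φ n : ℝ)+1)))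
          Filter.atTop (nhds 0) := by
        rw [← ENNReal.ofReal_zero]
        apply (ENNReal.continuous_ofReal.tendsto 0).comp
        exact tendsto_one_div_add_atTop_nhds_zero_nat.comp hφ.tendsto_atTop
      exact le_antisymm (ge_of_tendsto htend
        (Filter.eventually_atTop.2 ⟨max N₁ (2*m+2), key⟩)) zero_le
    -- NA gives a·Y = 0 q.s., hence D ⊥ a
    have hDsub : D ⊆ {y : EuclideanSpace ℝ (Fin d) | (inner ℝ a y : ℝ) = 0} := by
      have hclosed : IsClosed {y : EuclideanSpace ℝ (Fin d) | (inner ℝ a y : ℝ) = 0} :=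
        isClosed_eq (Continuous.inner continuous_const continuous_id) continuous_const
      apply Set.sInter_subset_of_mem
      refine ⟨hclosed, fun P hP => ?_⟩
      haveI := h𝒬prob P hP
      have hzero := hNA a hapos P hP
      have hmeas : MeasurableSet (Y ⁻¹' {y : EuclideanSpace ℝ (Fin d) | (inner ℝ a y : ℝ) = 0}) :=
        hY hclosed.measurableSet
      refine (prob_compl_eq_zero_iff hmeas).1 ?_
      have : (Y ⁻¹' {y : EuclideanSpace ℝ (Fin d) | (inner ℝ a y : ℝ) = 0})ᶜ
          = {ω | ¬ (inner ℝ a (Y ω) : ℝ) = 0} := rfl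
      rw [this, ← ae_iff]
      exact hzero
    have haorth : a ∈ (ℝ ∙ a)ᗮ := by
      have hKle : (affineSpan ℝ D).direction ≤ (ℝ ∙ a)ᗮ := by
        rw [direction_affineSpan, vectorSpan_def]
        rw [Submodule.span_le]
        rintro x ⟨y1, hy1, y2, hy2, rfl⟩
        rw [SetLike.mem_coe, Submodule.mem_orthogonal_singleton_iff_inner_right]
        show (inner ℝ a (y1 - y2) : ℝ) = 0
        rw [inner_sub_right, hDsub hy1, hDsub hy2, sub_zero]
      exact hKle haK
    have : (inner ℝ a a : ℝ) = 0 :=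
      Submodule.mem_orthogonal_singleton_iff_inner_right.1 haorth
    rw [real_inner_self_eq_norm_sq, hanorm] at this
    norm_num at this
  · -- quantitative → NA
    rintro ⟨β, κ, hβ, hβ1, hκ, hκ1, hquant⟩
    intro h hpos P hP
    haveI := h𝒬prob P hP
    have h0W : (0 : EuclideanSpace ℝ (Fin d)) ∈ affineSpan ℝ D := by
      by_contra h0
      obtain ⟨w, hwW, hwne, hwip⟩ := exists_normal_of_zero_not_mem D hDne h0
      obtain ⟨Pw, hPw, hPineq⟩ := hquant w hwW hwne
      haveI := h𝒬prob Pw hPw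
      have hae := ae_mem_qsSupport 𝒬 h𝒬prob Y hY hPw
      have hwpos : (0:ℝ) < ‖w‖ := norm_pos_iff.2 hwne
      have hnull : Pw {ω | (inner ℝ w (Y ω) : ℝ) < -β * ‖w‖} = 0 := by
        refine measure_mono_null ?_ ((ae_iff.1 hae))
        intro ω hω
        simp only [Set.mem_setOf_eq] at hω ⊢
        intro hmem
        have h2 := hwip _ (subset_affineSpan ℝ D hmem)
        nlinarith
      rw [hnull] at hPineq
      have := ENNReal.ofReal_pos.2 hκ
      exact absurd (le_antisymm hPineq zero_le) (ne_of_gt this)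
    set K := (affineSpan ℝ D).direction with hK
    set h' : EuclideanSpace ℝ (Fin d) := (K.orthogonalProjectionOnto h : EuclideanSpace ℝ (Fin d))
      with hh'
    have hdiff : h - h' ∈ Kᗮ := Submodule.sub_starProjection_mem_orthogonal (K := K) h
    have hips : ∀ y ∈ affineSpan ℝ D, (inner ℝ h y : ℝ) = inner ℝ h' y := by
      intro y hy
      have hyK : y ∈ K := (mem_affineSpan_iff_mem_direction h0W y).1 hy
      have h1 : (inner ℝ y (h - h') : ℝ) = 0 := (Submodule.mem_orthogonal K _).1 hdiff y hyK
      have h2 : (inner ℝ (h - h') y : ℝ) = 0 := by rw [real_inner_comm]; exact h1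
      rw [inner_sub_left] at h2
      linarith
    by_cases hzero : h' = 0
    · filter_upwards [ae_mem_qsSupport 𝒬 h𝒬prob Y hY hP] with ω hω
      have := hips (Y ω) (subset_affineSpan ℝ D hω)
      rw [this, hzero, inner_zero_left]
    · exfalso
      have hmemW : h' ∈ affineSpan ℝ D :=
        (mem_affineSpan_iff_mem_direction h0W h').2 (K.orthogonalProjectionOnto h).2
      obtain ⟨Ph, hPh, hineq⟩ := hquant h' hmemW hzero
      haveI := h𝒬prob Ph hPh
      have hae := ae_mem_qsSupport 𝒬 h𝒬prob Y hY hPh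
      have haepos := hpos Ph hPh
      have hpos' : (0:ℝ) < ‖h'‖ := norm_pos_iff.2 hzero
      have hnull : Ph {ω | (inner ℝ h' (Y ω) : ℝ) < -β * ‖h'‖} = 0 := by
        refine measure_mono_null ?_ (ae_iff.1 (hae.and haepos))
        intro ω hω
        simp only [Set.mem_setOf_eq] at hω ⊢
        rintro ⟨hmem, hge⟩
        have h2 := hips _ (subset_affineSpan ℝ D hmem)
        nlinarith
      rw [hnull] at hineq
      have := ENNReal.ofReal_pos.2 hκ
      exact absurd (le_antisymm hineq zero_le) (ne_of_gt this)
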